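/- For μ-almost every ω with H(ω) > 0, the regular conditional distribution of H given (X,Z), evaluated at the point (X(ω), Z(ω)) and at the set Iic(H(ω)), equals U(ω); formally, condDistrib H ⟨X,Z⟩ μ (X ω, Z ω) (Set.Iic (H ω)) = ENNReal.ofReal (U ω) for μ-a.e. ω ∈ {H > 0}. (That is, the control function V := F_{H|X,Z}(H | X,Z) is μ-a.s. equal to U on the event {H > 0}.) -/

import Mathlib

open MeasureTheory ProbabilityTheory

/-- The control function `V := F_{H|X,Z}(H | X,Z)` is μ-a.s. equal to the latent
uniform variable `U` on the event `{H > 0}`. -/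
theorem condDistrib_hours_eq_uniform
    {Ω : Type*} [MeasurableSpace Ω] [StandardBorelSpace Ω]
    (μ : Measure Ω) [IsProbabilityMeasure μ]
    {dx dz : ℕ}
    (X : Ω → (Fin dx → ℝ)) (Z : Ω → (Fin dz → ℝ)) (U : Ω → ℝ)
    (hX : Measurable X) (hZ : Measurable Z) (hU : Measurable U)
    (hindep : IndepFun (fun ω => (X ω, Z ω)) U μ)
    (hUnif : μ.map U = volume.restrict (Set.Icc (0 : ℝ) 1))
    (k : (Fin dx → ℝ) → (Fin dz → ℝ) → ℝ → ℝ)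
    (hk : Measurable fun p : (Fin dx → ℝ) × (Fin dz → ℝ) × ℝ => k p.1 p.2.1 p.2.2)
    (hkmono : ∀ x z, StrictMono (k x z))
    (H : Ω → ℝ) (hH : H = fun ω => max (k (X ω) (Z ω) (U ω)) 0) :
    ∀ᵐ ω ∂μ, 0 < H ω →
      condDistrib H (fun ω => (X ω, Z ω)) μ (X ω, Z ω) (Set.Iic (H ω))
        = ENNReal.ofReal (U ω) := by
  set P := ((Fin dx → ℝ) × (Fin dz → ℝ))
  set ν : Measure ℝ := volume.restrict (Set.Icc (0 : ℝ) 1) with hν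
  have hνprob : IsProbabilityMeasure ν := by
    constructor
    rw [hν, Measure.restrict_apply_univ, Real.volume_Icc]
    norm_num
  set W : Ω → P := fun ω => (X ω, Z ω) with hW
  have hWm : Measurable W := hX.prodMk hZ
  set g : P × ℝ → ℝ := fun q => max (k q.1.1 q.1.2 q.2) 0 with hg
  have hgm : Measurable g := by
    have : Measurable fun q : P × ℝ => k q.1.1 q.1.2 q.2 :=
      hk.comp (measurable_fst.fst.prodMk (measurable_fst.snd.prodMk measurable_snd))
    exact this.max measurable_const
  have hHm : Measurable H := by
    rw [hH]
    exact hgm.comp ((hX.prodMk hZ).prodMk hU)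
  -- the candidate kernel
  set κ : Kernel P ℝ :=
    Kernel.map ((Kernel.deterministic (id : P → P) measurable_id).prod (Kernel.const P ν)) g
    with hκdef
  have hκ_apply : ∀ p : P, κ p = ν.map (fun u => g (p, u)) := by
    intro p
    rw [hκdef, Kernel.map_apply _ hgm, Kernel.prod_apply, Kernel.deterministic_apply,
      Kernel.const_apply, Measure.dirac_prod, Measure.map_map hgm measurable_prodMk_left]
    rfl
  have hκfin : IsFiniteKernel κ := by
    rw [hκdef]
    have : IsMarkovKernel ((Kernel.deterministic (id : P → P) measurable_id).prod
        (Kernel.const P ν)) := by infer_instance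
    haveI : IsMarkovKernel (((Kernel.deterministic (id : P → P) measurable_id).prod
        (Kernel.const P ν)).map g) := Kernel.IsMarkovKernel.map _ hgm
    infer_instance
  -- the compProd identity
  have hmapWU : μ.map (fun ω => (W ω, U ω)) = (μ.map W).prod ν := by
    rw [← hUnif]
    exact (indepFun_iff_map_prod_eq_prod_map_map hWm.aemeasurable hU.aemeasurable).mp hindep
  have hcomp : μ.map (fun ω => (W ω, H ω)) = μ.map W ⊗ₘ κ := by
    have hF : Measurable fun q : P × ℝ => (q.1, g q) := measurable_fst.prodMk hgm
    have h1 : μ.map (fun ω => (W ω, H ω))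
        = ((μ.map W).prod ν).map (fun q : P × ℝ => (q.1, g q)) := by
      rw [← hmapWU, Measure.map_map hF ((hWm.prodMk hU))]
      rw [hH]
      rfl
    rw [h1]
    ext s hs
    rw [Measure.map_apply hF hs, Measure.prod_apply (hF hs),
      Measure.compProd_apply hs]
    refine lintegral_congr fun p => ?_
    rw [hκ_apply p, Measure.map_apply (f := fun u => g (p, u))
      (hgm.comp measurable_prodMk_left) (measurable_prodMk_left hs)]
    rfl
  have haeκ : ∀ᵐ p ∂μ.map W, κ p = condDistrib H W μ p :=
    (condDistrib_ae_eq_of_measure_eq_compProd_of_measurable hWm hHm hcomp).mono fun _ hp => hp.symm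
  have haeκ' : ∀ᵐ ω ∂μ, κ (W ω) = condDistrib H W μ (W ω) :=
    ae_of_ae_map hWm.aemeasurable haeκ
  have haeU : ∀ᵐ ω ∂μ, U ω ∈ Set.Icc (0 : ℝ) 1 := by
    refine ae_of_ae_map hU.aemeasurable ?_
    rw [hUnif]
    exact ae_restrict_mem measurableSet_Icc
  filter_upwards [haeκ', haeU] with ω hκω hUω hpos
  have hkey : condDistrib H W μ (W ω) (Set.Iic (H ω)) = ENNReal.ofReal (U ω) := by
    rw [← hκω, hκ_apply]
    have hHω : H ω = k (X ω) (Z ω) (U ω) := by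
      rw [hH]
      have : (0 : ℝ) < max (k (X ω) (Z ω) (U ω)) 0 := by rw [hH] at hpos; exact hpos
      simp only [lt_max_iff, lt_self_iff_false, or_false] at this
      exact max_eq_left this.le
    have hkpos : 0 < k (X ω) (Z ω) (U ω) := hHω ▸ hpos
    rw [Measure.map_apply (f := fun u => g ((W ω), u))
      (hgm.comp measurable_prodMk_left) measurableSet_Iic]
    have hset : (fun u => g ((W ω), u)) ⁻¹' Set.Iic (H ω) = Set.Iic (U ω) := by
      ext u
      simp only [Set.mem_preimage, Set.mem_Iic, hg, hW, hHω, max_le_iff]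
      constructor
      · rintro ⟨h1, -⟩
        exact ((hkmono (X ω) (Z ω)).le_iff_le).mp h1
      · intro h
        exact ⟨(hkmono (X ω) (Z ω)).le_iff_le.mpr h, hkpos.le⟩
    rw [hset, hν, Measure.restrict_apply measurableSet_Iic]
    have : Set.Iic (U ω) ∩ Set.Icc (0:ℝ) 1 = Set.Icc 0 (U ω) := by
      ext u
      simp only [Set.mem_inter_iff, Set.mem_Iic, Set.mem_Icc]
      exact ⟨fun ⟨h1, h2, _⟩ => ⟨h2, h1⟩, fun ⟨h1, h2⟩ => ⟨h2, h1, h2.trans hUω.2⟩⟩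
    rw [this, Real.volume_Icc, sub_zero]
  exact hkey
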